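/- (Appendix Lemma of the paper.) Let B, B' ≥ 1, D ≥ 1, and let X¹, X² : Fin B → ℝ^D and X³, X⁴ : Fin B' → ℝ^D be tuples of points. Let X¹∪X³ and X²∪X⁴ denote the concatenated tuples Fin (B+B') → ℝ^D. Then M(X¹∪X³, X²∪X⁴) ≤ M(X¹, X²) + M(X³, X⁴), i.e., (B+B')·W₂²(μ(X¹∪X³), μ(X²∪X⁴)) ≤ B·W₂²(μ(X¹), μ(X²)) + B'·W₂²(μ(X³), μ(X⁴)), where W₂² between uniform empirical measures of equal-size tuples of size m equals (1/m) times the optimal matching cost. -/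
import Mathlib


open scoped BigOperators

/-- Optimal matching cost between two equal-size tuples of points in Euclidean space:
the minimum over permutations `π` of `Σ_i ‖X i − Y (π i)‖²`. For tuples of size `m`,
`(1/m) · matchCost X Y` is the squared 2-Wasserstein distance between the uniform
empirical measures of `X` and `Y`. -/
noncomputable def matchCost {m D : ℕ} (X Y : Fin m → EuclideanSpace ℝ (Fin D)) : ℝ :=
  ⨅ π : Equiv.Perm (Fin m), ∑ i, ‖X i - Y (π i)‖ ^ 2

lemma matchCost_exists_min {m D : ℕ} (X Y : Fin m → EuclideanSpace ℝ (Fin D)) :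
    ∃ π : Equiv.Perm (Fin m), matchCost X Y = ∑ i, ‖X i - Y (π i)‖ ^ 2 := by
  obtain ⟨π₀, hπ₀⟩ := Finite.exists_min (fun π : Equiv.Perm (Fin m) =>
    ∑ i, ‖X i - Y (π i)‖ ^ 2)
  refine ⟨π₀, le_antisymm ?_ (le_ciInf hπ₀)⟩
  exact ciInf_le (Set.Finite.bddBelow (Set.finite_range _)) π₀

/-- Appendix Lemma: `(B+B') · W₂²(μ(X¹∪X³), μ(X²∪X⁴)) ≤ B · W₂²(μ(X¹), μ(X²)) +
B' · W₂²(μ(X³), μ(X⁴))`, stated via the (unnormalized) optimal matching costs. -/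
theorem matchCost_append_le (B B' D : ℕ) (hB : 1 ≤ B) (hB' : 1 ≤ B') (hD : 1 ≤ D)
    (X₁ X₂ : Fin B → EuclideanSpace ℝ (Fin D))
    (X₃ X₄ : Fin B' → EuclideanSpace ℝ (Fin D)) :
    matchCost (Fin.append X₁ X₃) (Fin.append X₂ X₄) ≤ matchCost X₁ X₂ + matchCost X₃ X₄ := by
  obtain ⟨π₀, hπ₀⟩ := matchCost_exists_min X₁ X₂
  obtain ⟨σ₀, hσ₀⟩ := matchCost_exists_min X₃ X₄
  set e := finSumFinEquiv (m := B) (n := B')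
  set τ : Equiv.Perm (Fin (B + B')) := e.symm.trans ((π₀.sumCongr σ₀).trans e) with hτ
  have key : (∑ i, ‖Fin.append X₁ X₃ i - Fin.append X₂ X₄ (τ i)‖ ^ 2)
      = (∑ i, ‖X₁ i - X₂ (π₀ i)‖ ^ 2) + ∑ i, ‖X₃ i - X₄ (σ₀ i)‖ ^ 2 := by
    rw [← Equiv.sum_comp e (fun i => ‖Fin.append X₁ X₃ i - Fin.append X₂ X₄ (τ i)‖ ^ 2),
      Fintype.sum_sum_type]
    congr 1 <;> refine Finset.sum_congr rfl fun x _ => ?_ <;>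
      simp [hτ, e, finSumFinEquiv_apply_left, finSumFinEquiv_apply_right,
        Fin.append_left, Fin.append_right]
  calc matchCost (Fin.append X₁ X₃) (Fin.append X₂ X₄)
      ≤ ∑ i, ‖Fin.append X₁ X₃ i - Fin.append X₂ X₄ (τ i)‖ ^ 2 :=
        ciInf_le (Set.Finite.bddBelow (Set.finite_range _)) τ
    _ = matchCost X₁ X₂ + matchCost X₃ X₄ := by rw [key, hπ₀, hσ₀]
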